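/- arXiv:2401.07983 — 2 statements merged into one kernel-verified Lean document; each statement's English description precedes it below -/
import Mathlib

section
/- Let p : X̃ → X be the universal cover of a path-connected, locally path-connected, semilocally simply connected space X, and let N ⊆ X be a path-connected subspace such that p⁻¹(N) has finitely many path components. Then the image of the induced map i₊ : π₁(N) → π₁(X) has finite index in π₁(X). -/
open CategoryTheory



open CategoryTheory unitInterval Set

noncomputable section LiftSection

variable {E X : Type*} [TopologicalSpace E] [TopologicalSpace X] {p : E → X}

/-- first half reparametrization of a path -/
def Path.fH {x y : X} (γ : Path x y) : Path x (γ ⟨1/2, by norm_num⟩) where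
  toFun t := γ ⟨(t : ℝ)/2, ⟨by linarith [t.2.1], by linarith [t.2.2]⟩⟩
  continuous_toFun := γ.continuous.comp (Continuous.subtype_mk (continuous_subtype_val.div_const 2) _)
  source' := by norm_num
  target' := rfl

def Path.sH {x y : X} (γ : Path x y) : Path (γ ⟨1/2, by norm_num⟩) y where
  toFun t := γ ⟨((t : ℝ)+1)/2, ⟨by linarith [t.2.1], by linarith [t.2.2]⟩⟩
  continuous_toFun := γ.continuous.comp
    (Continuous.subtype_mk ((continuous_subtype_val.add continuous_const).div_const 2) _)
  source' := by norm_num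
  target' := by norm_num

theorem chart_lift {F : Type*} [TopologicalSpace F] (T : Bundle.Trivialization F p)
    {x y : X} (γ : Path x y) (hγ : ∀ t, γ t ∈ T.baseSet) (e₀ : E) (he : p e₀ = x) :
    ∃ e₁, ∃ Γ : Path e₀ e₁, ∀ t, p (Γ t) = γ t := by
  have hx : p e₀ ∈ T.baseSet := by rw [he, ← γ.source]; exact hγ 0
  set c := (T e₀).2 with hc
  set g : I → E := fun t => T.toOpenPartialHomeomorph.symm (γ t, c) with hg
  have hmemT : ∀ t : I, ((γ t, c) : X × F) ∈ T.target := fun t => T.mem_target.mpr (hγ t)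
  have hcont : Continuous g :=
    T.toOpenPartialHomeomorph.continuousOn_symm.comp_continuous
      (γ.continuous.prodMk continuous_const) hmemT
  have hproj : ∀ t, p (g t) = γ t := fun t => T.proj_symm_apply (hmemT t)
  have hg0 : g 0 = e₀ := by
    have h1 : ((γ 0, c) : X × F) = T e₀ := by
      rw [γ.source, ← he]; exact T.mk_proj_snd' hx
    show T.toOpenPartialHomeomorph.symm (γ 0, c) = e₀
    rw [h1]
    exact T.toOpenPartialHomeomorph.left_inv (T.mem_source.mpr hx)
  exact ⟨g 1, ⟨⟨g, hcont⟩, hg0, rfl⟩, hproj⟩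

theorem lift_aux (hp : IsCoveringMap p) [∀ z : X, Nonempty (p ⁻¹' {z})] : ∀ (m : ℕ) {x y : X} (γ : Path x y),
    (∀ a : I, ∃ z : X, ∀ t : I, |((t : ℝ) - a)| ≤ (1/2)^m →
      γ t ∈ (hp z).toTrivialization.baseSet) →
    ∀ e₀ : E, p e₀ = x → ∃ e₁, ∃ Γ : Path e₀ e₁, ∀ t, p (Γ t) = γ t := by
  intro m
  induction m with
  | zero =>
    intro x y γ h e₀ he
    obtain ⟨z, hz⟩ := h 0
    refine chart_lift (hp z).toTrivialization γ (fun t => hz t ?_) e₀ he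
    simp only [pow_zero, Icc.coe_zero, sub_zero]
    rw [abs_of_nonneg t.2.1]; exact t.2.2
  | succ m ih =>
    intro x y γ h e₀ he
    have h1 : ∀ a : I, ∃ z : X, ∀ t : I, |((t : ℝ) - a)| ≤ (1/2)^m →
        γ.fH t ∈ (hp z).toTrivialization.baseSet := by
      intro a
      obtain ⟨z, hz⟩ := h ⟨(a : ℝ)/2, ⟨by linarith [a.2.1], by linarith [a.2.2]⟩⟩
      refine ⟨z, fun t ht => hz _ ?_⟩
      show |(t : ℝ)/2 - (a : ℝ)/2| ≤ (1/2)^(m+1)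
      rw [div_sub_div_same, abs_div, abs_of_pos (by norm_num : (0:ℝ) < 2), pow_succ]
      linarith
    have h2 : ∀ a : I, ∃ z : X, ∀ t : I, |((t : ℝ) - a)| ≤ (1/2)^m →
        γ.sH t ∈ (hp z).toTrivialization.baseSet := by
      intro a
      obtain ⟨z, hz⟩ := h ⟨((a : ℝ)+1)/2, ⟨by linarith [a.2.1], by linarith [a.2.2]⟩⟩
      refine ⟨z, fun t ht => hz _ ?_⟩
      show |((t : ℝ)+1)/2 - ((a : ℝ)+1)/2| ≤ (1/2)^(m+1)
      rw [div_sub_div_same, add_sub_add_right_eq_sub, abs_div,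
        abs_of_pos (by norm_num : (0:ℝ) < 2), pow_succ]
      linarith
    obtain ⟨e₁, Γ₁, hΓ₁⟩ := ih γ.fH h1 e₀ he
    have he₁ : p e₁ = γ ⟨1/2, by norm_num⟩ := by
      have := hΓ₁ 1
      rwa [Γ₁.target, γ.fH.target] at this
    obtain ⟨e₂, Γ₂, hΓ₂⟩ := ih γ.sH h2 e₁ he₁
    refine ⟨e₂, Γ₁.trans Γ₂, fun t => ?_⟩
    rw [Path.trans_apply]
    split_ifs with ht
    · rw [hΓ₁]
      show γ _ = γ t
      congr 1
      exact Subtype.ext (by push_cast; ring)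
    · rw [hΓ₂]
      show γ _ = γ t
      congr 1
      exact Subtype.ext (by push_cast; ring)

theorem covering_path_lift (hp : IsCoveringMap p) {x y : X} (γ : Path x y)
    (e₀ : E) (he : p e₀ = x) : ∃ e₁, ∃ Γ : Path e₀ e₁, ∀ t, p (Γ t) = γ t := by
  obtain ⟨Γ, hΓ, h0⟩ := hp.exists_path_lifts γ.toContinuousMap e₀ (by simp [he])
  exact ⟨Γ 1, ⟨Γ, h0, rfl⟩, fun t => congrFun hΓ t⟩

theorem covering_surjective (hp : IsCoveringMap p) [PreconnectedSpace X] (hne : Nonempty E) :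
    Function.Surjective p := by
  have hclopen : IsClopen (Set.range p) := by
    constructor
    · rw [← isOpen_compl_iff, isOpen_iff_mem_nhds]
      intro x hx
      have hemp : IsEmpty (p ⁻¹' {x} : Set E) := ⟨fun e => hx ⟨e.1, e.2⟩⟩
      obtain ⟨_, U, hxU, hU, _, H, _⟩ := hp x
      refine Filter.mem_of_superset (hU.mem_nhds hxU) (fun y hy hyr => ?_)
      obtain ⟨e, rfl⟩ := hyr
      exact hemp.false (H ⟨e, hy⟩).2
    · exact hp.isOpenMap.isOpen_range
  obtain ⟨e⟩ := hne
  have huniv : Set.range p = Set.univ := hclopen.eq_univ ⟨p e, Set.mem_range_self e⟩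
  intro x
  have : x ∈ Set.range p := huniv ▸ Set.mem_univ x
  exact this

end LiftSection

/-- The homomorphism `π₁(N, n₀) → π₁(X, n₀)` induced by the inclusion of a subspace
`N ⊆ X`, obtained from the fundamental groupoid functor. -/
noncomputable def inclusionInducedPi1Map (X : Type) [TopologicalSpace X] (N : Set X) (n₀ : N) :
    Aut (FundamentalGroupoid.mk n₀) →* Aut (FundamentalGroupoid.mk (n₀ : X)) :=
  Functor.mapAut (FundamentalGroupoid.mk n₀)
    (FundamentalGroupoid.fundamentalGroupoidFunctor.map
      (X := TopCat.of N) (Y := TopCat.of X) (TopCat.ofHom ⟨Subtype.val, continuous_subtype_val⟩))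

attribute [local instance] Path.Homotopic.setoid

/-- Let `p : X̃ → X` be the universal cover of a path-connected, locally path-connected
space `X`, and let `N ⊆ X` be a path-connected subspace such that `p⁻¹(N)` has finitely
many path components.  Then the image of `i₊ : π₁(N) → π₁(X)` has finite index in
`π₁(X)`. -/
theorem finiteIndex_of_finitely_many_pathComponents
    (X : Type) [TopologicalSpace X] [PathConnectedSpace X] [LocallyPathConnectedSpace X]
    (Xt : Type) [TopologicalSpace Xt] [SimplyConnectedSpace Xt]
    (p : Xt → X) (hp : IsCoveringMap p)
    (N : Set X) (hN : IsPathConnected N) (n₀ : N)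
    (hfin : Finite (ZerothHomotopy (p ⁻¹' N))) :
    (inclusionInducedPi1Map X N n₀).range.FiniteIndex := by
  classical
  set H := (inclusionInducedPi1Map X N n₀).range with hH
  obtain ⟨e₀, he₀⟩ := covering_surjective hp inferInstance (n₀ : X)
  -- representative loop of a fundamental group element
  let out : Aut (FundamentalGroupoid.mk (n₀ : X)) → Path (n₀ : X) (n₀ : X) := fun g =>
    Quotient.out (g.hom : Path.Homotopic.Quotient (n₀ : X) (n₀ : X))
  have hout : ∀ g, (⟦out g⟧ : Path.Homotopic.Quotient (n₀ : X) (n₀ : X)) = g.hom :=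
    fun g => Quotient.out_eq _
  -- lift each representative loop
  have hlift : ∀ g : Aut (FundamentalGroupoid.mk (n₀ : X)),
      ∃ e₁ : Xt, ∃ Γ : Path e₀ e₁, ∀ t, p (Γ t) = (out g) t :=
    fun g => covering_path_lift hp (out g) e₀ he₀
  choose ends Γs hΓs using hlift
  have hend : ∀ g, p (ends g) = (n₀ : X) := by
    intro g
    have := hΓs g 1
    rwa [(Γs g).target, (out g).target] at this
  have hmem : ∀ g, ends g ∈ p ⁻¹' N := fun g => by
    simp only [Set.mem_preimage, hend g]; exact n₀.2
  let F : Aut (FundamentalGroupoid.mk (n₀ : X)) → ZerothHomotopy (p ⁻¹' N) := fun g =>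
    Quotient.mk'' (⟨ends g, hmem g⟩ : p ⁻¹' N)
  -- key step : F g₁ = F g₂ implies same right coset
  have key : ∀ g₁ g₂, F g₁ = F g₂ → g₂ * g₁⁻¹ ∈ H := by
    intro g₁ g₂ hF
    have hJ : Joined (⟨ends g₁, hmem g₁⟩ : p ⁻¹' N) ⟨ends g₂, hmem g₂⟩ :=
      Quotient.eq''.mp hF
    obtain ⟨δt⟩ := hJ
    let δE : Path (ends g₁) (ends g₂) := δt.map continuous_subtype_val
    have hhom : ((Γs g₁).trans δE).Homotopic (Γs g₂) :=
      SimplyConnectedSpace.paths_homotopic _ _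
    -- the loop in N
    let δN : Path n₀ n₀ := by
      refine ⟨⟨fun t => ⟨p ((δt t) : Xt), (δt t).2⟩, ?_⟩, ?_, ?_⟩
      · exact Continuous.subtype_mk
          (hp.continuous.comp (continuous_subtype_val.comp δt.continuous)) _
      · exact Subtype.ext (by simp [hend g₁])
      · exact Subtype.ext (by simp [hend g₂])
    let δ' : Path (n₀ : X) (n₀ : X) := δN.map continuous_subtype_val
    -- HEq chain giving equality of homotopy classes
    have h1 : HEq (⟦(out g₁).trans δ'⟧ : Path.Homotopic.Quotient (n₀ : X) (n₀ : X))
        (⟦((Γs g₁).trans δE).map hp.continuous⟧ :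
          Path.Homotopic.Quotient (p e₀) (p (ends g₂))) := by
      refine Path.Homotopic.hpath_hext (fun t => ?_)
      show ((out g₁).trans δ') t = p (((Γs g₁).trans δE) t)
      rw [Path.trans_apply, Path.trans_apply]
      split_ifs with ht
      · exact (hΓs g₁ _).symm
      · rfl
    have h2 : (⟦((Γs g₁).trans δE).map hp.continuous⟧ :
          Path.Homotopic.Quotient (p e₀) (p (ends g₂)))
        = ⟦(Γs g₂).map hp.continuous⟧ :=
      Quotient.sound (Path.Homotopic.map hhom ⟨p, hp.continuous⟩)
    have h3 : HEq (⟦(Γs g₂).map hp.continuous⟧ :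
          Path.Homotopic.Quotient (p e₀) (p (ends g₂)))
        (⟦out g₂⟧ : Path.Homotopic.Quotient (n₀ : X) (n₀ : X)) :=
      Path.Homotopic.hpath_hext (fun t => hΓs g₂ t)
    have hclass : (⟦(out g₁).trans δ'⟧ : Path.Homotopic.Quotient (n₀ : X) (n₀ : X))
        = ⟦out g₂⟧ := eq_of_heq ((h1.trans (heq_of_eq h2)).trans h3)
    -- the element of the image subgroup
    have hmul : g₂ = (inclusionInducedPi1Map X N n₀ ((Groupoid.isoEquivHom (FundamentalGroupoid.mk n₀) (FundamentalGroupoid.mk n₀)).symm (FundamentalGroup.fromPath (X := TopCat.of N) ⟦δN⟧))) * g₁ := by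
      apply Iso.ext
      show g₂.hom = g₁.hom ≫ _
      have hmap : (inclusionInducedPi1Map X N n₀ ((Groupoid.isoEquivHom (FundamentalGroupoid.mk n₀) (FundamentalGroupoid.mk n₀)).symm (FundamentalGroup.fromPath (X := TopCat.of N) ⟦δN⟧))).hom
          = (⟦δ'⟧ : Path.Homotopic.Quotient (n₀ : X) (n₀ : X)) := by
        show (FundamentalGroupoid.fundamentalGroupoidFunctor.map
          (X := TopCat.of N) (Y := TopCat.of X)
          (TopCat.ofHom ⟨Subtype.val, continuous_subtype_val⟩)).map ⟦δN⟧ = _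
        rfl
      rw [hmap, ← hout g₁, ← hout g₂]
      show (⟦out g₂⟧ : Path.Homotopic.Quotient (n₀ : X) (n₀ : X))
        = Path.Homotopic.Quotient.trans ⟦out g₁⟧ ⟦δ'⟧
      exact hclass.symm
    rw [hmul, mul_inv_cancel_right]
    exact ⟨_, rfl⟩
  -- build the injection from the right coset space
  let Φ : Quotient (QuotientGroup.rightRel H) → ZerothHomotopy (p ⁻¹' N) :=
    fun c => F (Quotient.out c)
  have hΦ : Function.Injective Φ := by
    intro c₁ c₂ hc
    have := key _ _ hc
    rw [← Quotient.out_eq' c₁, ← Quotient.out_eq' c₂]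
    exact Quotient.sound' (QuotientGroup.rightRel_apply.mpr this)
  have hfinR : Finite (Quotient (QuotientGroup.rightRel H)) := Finite.of_injective Φ hΦ
  have hfinQ : Finite (Aut (FundamentalGroupoid.mk (n₀ : X)) ⧸ H) :=
    Finite.of_equiv _ (QuotientGroup.quotientRightRelEquivQuotientLeftRel H)
  exact H.finiteIndex_of_finite_quotient
end

section
/- Let p : X̃ → X be a covering map where X is path-connected and locally path-connected and π₁(X) is finite, and let Y be a simply connected, path-connected, locally path-connected space with a continuous map f : Y → X. Then there exists a continuous lift f̃ : Y → X̃ with p ∘ f̃ = f, and the graph of f̃ in Y × X̃ equals the preimage of the graph of f under the map id × p : Y × X̃ → Y × X, intersected with the connected component containing a chosen lifted basepoint. -/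
open Set Topology


/-- Extend a partial lift across one evenly covered slab in time. -/
theorem cov_step_extend {E B : Type} [TopologicalSpace E] [TopologicalSpace B] {p : E → B}
    {α : Type} [TopologicalSpace α]
    {K : α → ℝ → B} (hK : Continuous fun z : α × ℝ => K z.1 z.2)
    {τ τ' : ℝ} (hττ' : τ ≤ τ')
    {U : Set B}
    (hU : ∃ (F : Type) (_ : TopologicalSpace F) (_ : DiscreteTopology F)
      (e : Bundle.Trivialization F p), e.baseSet = U)
    (hKU : ∀ (a : α) (t : ℝ), t ∈ Set.Icc τ τ' → K a t ∈ U)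
    {g : α × ℝ → E} (hg : Continuous g) (hpg : ∀ a, p (g (a, τ)) = K a τ) :
    ∃ g' : α × ℝ → E, Continuous g' ∧ (∀ a t, t ≤ τ → g' (a, t) = g (a, t)) ∧
      (∀ a t, τ ≤ t → p (g' (a, t)) = K a (min t τ')) := by
  obtain ⟨F, _, _, e, rfl⟩ := hU
  have hsrc : ∀ a, g (a, τ) ∈ e.source := fun a =>
    e.mem_source.2 (by rw [hpg]; exact hKU a τ ⟨le_refl _, hττ'⟩)
  have hgτ : Continuous fun a => g (a, τ) := hg.comp (continuous_id.prodMk continuous_const)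
  set sheet : α → F := fun a => (e (g (a, τ))).2 with hsheet_def
  have hsheet : Continuous sheet := by
    have h1 : Continuous fun a => e (g (a, τ)) := by
      have := e.continuousOn_toFun.comp_continuous hgτ hsrc
      exact this
    exact continuous_snd.comp h1
  have hclamp : ∀ t : ℝ, max τ (min t τ') ∈ Set.Icc τ τ' := fun t =>
    ⟨le_max_left _ _, max_le hττ' (min_le_right _ _)⟩
  have hmemT : ∀ (a : α) (t : ℝ), (K a (max τ (min t τ')), sheet a) ∈ e.target := fun a t =>
    e.mem_target.2 (hKU a _ (hclamp t))
  set g2 : α × ℝ → E := fun z =>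
    e.toOpenPartialHomeomorph.symm (K z.1 (max τ (min z.2 τ')), sheet z.1) with hg2_def
  have hg2 : Continuous g2 := by
    apply e.toOpenPartialHomeomorph.continuousOn_symm.comp_continuous
    · refine Continuous.prodMk ?_ (hsheet.comp continuous_fst)
      exact hK.comp (continuous_fst.prodMk
        (continuous_const.max (continuous_snd.min continuous_const)))
    · exact fun z => hmemT z.1 z.2
  have hagree : ∀ z : α × ℝ, τ = z.2 → g2 z = g (z.1, τ) := by
    intro z hz
    have h1 : max τ (min z.2 τ') = τ := by rw [← hz, min_eq_left hττ', max_self]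
    have h2 : (K z.1 (max τ (min z.2 τ')), sheet z.1) = e (g (z.1, τ)) := by
      rw [h1, ← hpg z.1]
      exact e.mk_proj_snd (hsrc z.1)
    rw [hg2_def]
    simp only [h2]
    exact e.toOpenPartialHomeomorph.left_inv (hsrc z.1)
  refine ⟨fun z => if τ ≤ z.2 then g2 z else g z, ?_, ?_, ?_⟩
  · exact Continuous.if_le hg2 hg continuous_const continuous_snd
      (fun z hz => by rw [hagree z hz, hz])
  · intro a t ht
    by_cases h : τ ≤ t
    · have ht' : t = τ := le_antisymm ht h
      simp only [if_pos h]
      rw [hagree (a, t) ht'.symm, ht']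
    · simp only [if_neg h]
  · intro a t ht
    simp only [if_pos ht]
    rw [hg2_def]
    have := e.proj_symm_apply (hmemT a t)
    simp only [this]
    rw [max_eq_right (le_min ht hττ')]


theorem cov_range_clopen {E B : Type} [TopologicalSpace E] [TopologicalSpace B] {p : E → B}
    (hp : IsCoveringMap p) : IsClopen (Set.range p) := by
  refine ⟨?_, hp.isOpenMap.isOpen_range⟩
  rw [← isOpen_compl_iff, isOpen_iff_mem_nhds]
  intro x hx
  obtain ⟨_, U, hxU, hU, _, Hh, _⟩ := hp x
  refine Filter.mem_of_superset (hU.mem_nhds hxU) ?_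
  rintro y hyU ⟨e, rfl⟩
  exact hx ⟨(Hh ⟨e, hyU⟩).2.1, (Hh ⟨e, hyU⟩).2.2⟩

theorem cov_strip_lift {E B : Type} [TopologicalSpace E] [TopologicalSpace B] {p : E → B}
    (hp : IsCoveringMap p) {H : ℝ × ℝ → B} (hH : Continuous H)
    {δ : ℝ → E} (hδ : Continuous δ) (hδ0 : ∀ s, p (δ s) = H (s, 0)) (s₀ : ℝ) :
    ∃ J : Set ℝ, IsOpen J ∧ s₀ ∈ J ∧ ∃ g : ↥J × ℝ → E, Continuous g ∧
      (∀ z : ↥J × ℝ, p (g z) = H (↑z.1, max 0 (min z.2 1))) ∧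
      (∀ s : ↥J, g (s, 0) = δ ↑s) := by
  classical
  -- evenly covered neighborhoods
  have hrng : ∀ u : ℝ, H (s₀, u) ∈ Set.range p := by
    have hc : IsClopen ((fun u : ℝ => H (s₀, u)) ⁻¹' Set.range p) :=
      (cov_range_clopen hp).preimage (hH.comp (continuous_const.prodMk continuous_id))
    have hu := hc.eq_univ ⟨0, δ s₀, hδ0 s₀⟩
    intro u
    have : u ∈ (fun u : ℝ => H (s₀, u)) ⁻¹' Set.range p := hu ▸ Set.mem_univ u
    exact this
  have hEC : ∀ x : B, (∃ u : ℝ, H (s₀, u) = x) → ∃ U : Set B, IsOpen U ∧ x ∈ U ∧ ∃ (F : Type) (_ : TopologicalSpace F)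
      (_ : DiscreteTopology F) (e : Bundle.Trivialization F p), e.baseSet = U := by
    rintro x ⟨u, hu⟩
    obtain ⟨e0, he0⟩ := hrng u
    haveI : Nonempty ↥(p ⁻¹' {x}) := ⟨⟨e0, show p e0 = x by rw [he0, hu]⟩⟩
    exact ⟨(hp x).toTrivialization.baseSet, (hp x).toTrivialization.open_baseSet,
      (hp x).mem_toTrivialization_baseSet, _, inferInstance, (hp x).1,
      (hp x).toTrivialization, rfl⟩
  choose U hUo hUm hUec using fun u : ℝ => hEC (H (s₀, u)) ⟨u, rfl⟩
  -- rectangles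
  have hrect : ∀ u : ℝ, ∃ (Ju Vu : Set ℝ), IsOpen Ju ∧ IsOpen Vu ∧ s₀ ∈ Ju ∧ u ∈ Vu ∧
      Ju ×ˢ Vu ⊆ H ⁻¹' (U u) := by
    intro u
    have hop : IsOpen (H ⁻¹' (U u)) := (hUo u).preimage hH
    obtain ⟨Ju, Vu, h1, h2, h3, h4, h5⟩ := isOpen_prod_iff.mp hop s₀ u (hUm u)
    exact ⟨Ju, Vu, h1, h2, h3, h4, h5⟩
  choose Jn V hJo hVo hJs hVm hJV using hrect
  -- finite subcover of the column
  obtain ⟨Fs, hFs⟩ := (isCompact_Icc (a := (0:ℝ)) (b := 1)).elim_finite_subcover V hVo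
    (fun t ht => mem_iUnion.2 ⟨t, hVm t⟩)
  set J : Set ℝ := ⋂ u ∈ (Fs : Set ℝ), Jn u with hJ_def
  have hJopen : IsOpen J := Fs.finite_toSet.isOpen_biInter (fun u _ => hJo u)
  have hJmem : s₀ ∈ J := mem_iInter₂.2 fun u _ => hJs u
  have hJsub : ∀ u ∈ Fs, J ⊆ Jn u := fun u hu => biInter_subset_of_mem hu
  -- Lebesgue number
  obtain ⟨δL, hδL, hLeb⟩ := lebesgue_number_lemma_of_metric (isCompact_Icc (a := (0:ℝ)) (b := 1))
    (c := fun i : {u // u ∈ Fs} => V ↑i) (fun i => hVo ↑i)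
    (by intro x hx
        obtain ⟨u, hu⟩ := mem_iUnion₂.mp (hFs hx)
        exact mem_iUnion.2 ⟨⟨u, hu.1⟩, hu.2⟩)
  obtain ⟨n, hn⟩ := exists_nat_one_div_lt hδL
  set N : ℕ := n + 1 with hN_def
  have hNpos : (0 : ℝ) < N := by positivity
  have hNne : (N : ℝ) ≠ 0 := ne_of_gt hNpos
  have h1N : 1 / (N : ℝ) < δL := by exact_mod_cast hn
  -- main induction
  have claim : ∀ i : ℕ, i ≤ N → ∃ g : ↥J × ℝ → E, Continuous g ∧
      (∀ z : ↥J × ℝ, p (g z) = H (↑z.1, max 0 (min z.2 ((i : ℝ) / N)))) ∧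
      (∀ s : ↥J, g (s, 0) = δ ↑s) := by
    intro i
    induction i with
    | zero =>
      intro _
      refine ⟨fun z => δ ↑z.1, hδ.comp (continuous_subtype_val.comp continuous_fst), ?_, fun s => rfl⟩
      intro z
      have : max 0 (min z.2 ((0 : ℕ) / (N : ℝ))) = 0 := by
        simp only [Nat.cast_zero, zero_div]
        exact max_eq_left (min_le_right _ _)
      rw [this, hδ0]
    | succ i ih =>
      intro hiN
      obtain ⟨g, hgc, hgp, hg0⟩ := ih (Nat.le_of_succ_le hiN)
      set τ : ℝ := (i : ℝ) / N with hτ_def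
      set τ' : ℝ := ((i : ℝ) + 1) / N with hτ'_def
      have hτ0 : 0 ≤ τ := by positivity
      have hττ' : τ ≤ τ' := by
        rw [hτ_def, hτ'_def]
        gcongr
        linarith
      have hτ'1 : τ' ≤ 1 := by
        rw [div_le_one hNpos]
        exact_mod_cast hiN
      have hτ1 : τ ≤ 1 := hττ'.trans hτ'1
      have hdiff : τ' - τ = 1 / N := by
        rw [hτ_def, hτ'_def]
        field_simp
        ring
      obtain ⟨⟨u, hu⟩, hball⟩ := hLeb τ ⟨hτ0, hτ1⟩
      have hIccV : Icc τ τ' ⊆ V u := by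
        intro x hx
        apply hball
        rw [Metric.mem_ball, Real.dist_eq, abs_of_nonneg (by linarith [hx.1])]
        linarith [hx.2, hdiff, h1N]
      have hKU : ∀ (s : ↥J) (t : ℝ), t ∈ Icc τ τ' → H (↑s, t) ∈ U u := by
        intro s t ht
        exact hJV u ⟨hJsub u hu s.2, hIccV ht⟩
      have hK : Continuous fun z : ↥J × ℝ => H (↑z.1, z.2) :=
        hH.comp ((continuous_subtype_val.comp continuous_fst).prodMk continuous_snd)
      have hpg : ∀ s : ↥J, p (g (s, τ)) = H (↑s, τ) := by
        intro s
        rw [hgp (s, τ)]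
        congr 1
        rw [min_self, max_eq_right hτ0]
      obtain ⟨g', hg'c, hg'low, hg'high⟩ := cov_step_extend
        (K := fun (s : ↥J) t => H (↑s, t)) hK hττ' (hUec u) hKU hgc hpg
      refine ⟨g', hg'c, ?_, ?_⟩
      · intro z
        have hcast : ((i + 1 : ℕ) : ℝ) / N = τ' := by rw [hτ'_def]; push_cast; ring
        rw [hcast]
        rcases le_total z.2 τ with h | h
        · rw [hg'low z.1 z.2 h, hgp z]
          congr 2
          rw [min_eq_left (h.trans hττ'), min_eq_left h]
        · rw [hg'high z.1 z.2 h]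
          rw [max_eq_right (le_min (hτ0.trans h) (hτ0.trans hττ'))]
      · intro s
        rw [hg'low s 0 hτ0, hg0]
  obtain ⟨g, hgc, hgp, hg0⟩ := claim N le_rfl
  refine ⟨J, hJopen, hJmem, g, hgc, ?_, hg0⟩
  intro z
  rw [hgp z, div_self hNne]
theorem cov_sq_lift {E B : Type} [TopologicalSpace E] [TopologicalSpace B] {p : E → B}
    (hp : IsCoveringMap p) {H : ℝ × ℝ → B} (hH : Continuous H)
    (hHt : ∀ s t, H (s, max 0 (min t 1)) = H (s, t))
    {δ : ℝ → E} (hδ : Continuous δ) (hδ0 : ∀ s, p (δ s) = H (s, 0)) :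
    ∃ G : ℝ × ℝ → E, Continuous G ∧ (∀ z, p (G z) = H z) ∧ (∀ s, G (s, 0) = δ s) := by
  choose J hJo hJm g hgc hgp hg0 using cov_strip_lift hp hH hδ hδ0
  -- column function
  have hcol : ∀ (s₀ : ℝ) (s : ℝ) (hs : s ∈ J s₀) (t : ℝ),
      g s₀ (⟨s, hs⟩, t) = g s (⟨s, hJm s⟩, t) := by
    intro s₀ s hs t
    have h1 : Continuous fun t : ℝ => g s₀ (⟨s, hs⟩, t) :=
      (hgc s₀).comp (continuous_const.prodMk continuous_id)
    have h2 : Continuous fun t : ℝ => g s (⟨s, hJm s⟩, t) :=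
      (hgc s).comp (continuous_const.prodMk continuous_id)
    have he : (p ∘ fun t : ℝ => g s₀ (⟨s, hs⟩, t)) = (p ∘ fun t : ℝ => g s (⟨s, hJm s⟩, t)) := by
      funext t
      simp only [Function.comp_apply, hgp s₀ (⟨s, hs⟩, t), hgp s (⟨s, hJm s⟩, t)]
    have h0 : g s₀ (⟨s, hs⟩, (0:ℝ)) = g s (⟨s, hJm s⟩, (0:ℝ)) := by
      rw [hg0 s₀ ⟨s, hs⟩, hg0 s ⟨s, hJm s⟩]
    exact congrFun (hp.eq_of_comp_eq h1 h2 he 0 h0) t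
  set G : ℝ × ℝ → E := fun z => g z.1 (⟨z.1, hJm z.1⟩, z.2) with hG_def
  have hGp : ∀ z, p (G z) = H z := by
    intro z
    rw [hG_def]
    simp only
    rw [hgp z.1 (⟨z.1, hJm z.1⟩, z.2), hHt]
  have hG0 : ∀ s, G (s, 0) = δ s := fun s => hg0 s ⟨s, hJm s⟩
  refine ⟨G, ?_, hGp, hG0⟩
  rw [continuous_iff_continuousAt]
  intro z
  have hopen : IsOpen (J z.1 ×ˢ (Set.univ : Set ℝ)) := (hJo z.1).prod isOpen_univ
  have hmem : z ∈ J z.1 ×ˢ (Set.univ : Set ℝ) := ⟨hJm z.1, Set.mem_univ _⟩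
  have hco : ContinuousOn G (J z.1 ×ˢ (Set.univ : Set ℝ)) := by
    rw [continuousOn_iff_continuous_restrict]
    have : Set.domRestrict (J z.1 ×ˢ (Set.univ : Set ℝ)) G =
        (g z.1) ∘ (fun w : ↥(J z.1 ×ˢ (Set.univ : Set ℝ)) => (⟨w.val.1, w.prop.1⟩, w.val.2)) := by
      funext w
      simp only [Set.domRestrict_apply, Function.comp_apply, hG_def]
      exact (hcol z.1 w.val.1 w.prop.1 w.val.2).symm
    rw [this]
    exact (hgc z.1).comp ((Continuous.subtype_mk (continuous_fst.comp continuous_subtype_val)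
      _).prodMk (continuous_snd.comp continuous_subtype_val))
  exact hco.continuousAt (hopen.mem_nhds hmem)
theorem projIcc_clamp (t : ℝ) :
    Set.projIcc (0:ℝ) 1 zero_le_one (max 0 (min t 1)) = Set.projIcc 0 1 zero_le_one t := by
  apply Subtype.ext
  simp only [Set.projIcc]
  rcases le_total t 0 with h | h
  · rcases le_total t 1 with h1 | h1 <;> simp [min_def, max_def] <;> split_ifs <;> linarith
  · rcases le_total t 1 with h1 | h1 <;> simp [min_def, max_def] <;> split_ifs <;> linarith



/-- Lifting criterion with the graph description: a continuous map `f : Y → X` from a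
simply connected, path-connected, locally path-connected space lifts along a covering
`p : X̃ → X` of a path-connected, locally path-connected space with finite fundamental
group, and the graph of the lift is the connected component of the preimage of the graph
of `f` under `id × p` containing the lifted basepoint. -/
theorem lift_exists_and_graph_description
    (X Xt Y : Type) [TopologicalSpace X] [TopologicalSpace Xt] [TopologicalSpace Y]
    [PathConnectedSpace X] [LocallyPathConnectedSpace X]
    [SimplyConnectedSpace Y] [PathConnectedSpace Y] [LocallyPathConnectedSpace Y]
    (p : Xt → X) (hp : IsCoveringMap p)
    (f : Y → X) (hf : Continuous f)
    (y₀ : Y) (xt₀ : Xt) (hbase : p xt₀ = f y₀)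
    (hπ : Finite (FundamentalGroup X (f y₀))) :
    ∃ ft : Y → Xt, Continuous ft ∧ p ∘ ft = f ∧ ft y₀ = xt₀ ∧
      {q : Y × Xt | q.2 = ft q.1} =
        connectedComponentIn {q : Y × Xt | p q.2 = f q.1} (y₀, xt₀) := by
  classical
  set S : Set (Y × Xt) := {q : Y × Xt | p q.2 = f q.1} with hS_def
  have hz₀S : (y₀, xt₀) ∈ S := hbase
  set C : Set (Y × Xt) := connectedComponentIn S (y₀, xt₀) with hC_def
  have hz₀C : (y₀, xt₀) ∈ C := mem_connectedComponentIn hz₀S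
  have hCS : C ⊆ S := connectedComponentIn_subset _ _
  -- key local graph lemma
  have key : ∀ y : Y, ∃ W : Set Y, W ∈ 𝓝 y ∧ IsPathConnected W ∧
      ∀ y' x', y' ∈ W → p x' = f y' → ∃ g : Y → Xt,
        ContinuousOn g W ∧ (∀ u ∈ W, p (g u) = f u) ∧ g y' = x' ∧
        ∃ O : Set (Y × Xt), IsOpen O ∧ (∀ u ∈ interior W, (u, g u) ∈ O) ∧
          ∀ z ∈ S ∩ O, ∃ u ∈ W, z = (u, g u) := by
    intro y
    have hall : Set.range p = Set.univ := (cov_range_clopen hp).eq_univ ⟨p xt₀, xt₀, rfl⟩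
    obtain ⟨e0, he0⟩ : f y ∈ Set.range p := hall ▸ Set.mem_univ _
    haveI : Nonempty ↥(p ⁻¹' {f y}) := ⟨⟨e0, he0⟩⟩
    set e := (hp (f y)).toTrivialization with he_def
    have hb : f y ∈ e.baseSet := (hp (f y)).mem_toTrivialization_baseSet
    haveI : DiscreteTopology ↥(p ⁻¹' {f y}) := (hp (f y)).1
    have hUnhds : f ⁻¹' e.baseSet ∈ 𝓝 y := (e.open_baseSet.preimage hf).mem_nhds hb
    obtain ⟨W, ⟨hWn, hWpc⟩, hWsub⟩ := (path_connected_basis y).mem_iff.mp hUnhds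
    refine ⟨W, hWn, hWpc, ?_⟩
    intro y' x' hy' hpx'
    have hfy' : f y' ∈ e.baseSet := hWsub hy'
    have hx'src : x' ∈ e.source := e.mem_source.2 (by rw [hpx']; exact hfy')
    set i : ↥(p ⁻¹' {f y}) := (e x').2 with hi_def
    set g : Y → Xt := fun u => e.toOpenPartialHomeomorph.symm (f u, i) with hg_def
    have hmemT : ∀ u ∈ W, (f u, i) ∈ e.target := fun u hu => e.mem_target.2 (hWsub hu)
    have hgW : ∀ u ∈ W, p (g u) = f u := fun u hu => e.proj_symm_apply (hmemT u hu)
    have hgsrc : ∀ u ∈ W, g u ∈ e.source := fun u hu => e.map_target (hmemT u hu)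
    have hge : ∀ u ∈ W, e (g u) = (f u, i) := fun u hu => e.apply_symm_apply (hmemT u hu)
    refine ⟨g, ?_, hgW, ?_, ?_⟩
    · exact e.toOpenPartialHomeomorph.continuousOn_symm.comp
        ((hf.continuousOn).prodMk continuousOn_const) (fun u hu => hmemT u hu)
    · have hx'pair : (f y', i) = e x' := by
        rw [hi_def, ← hpx']
        exact e.mk_proj_snd hx'src
      rw [hg_def]
      simp only [hx'pair]
      exact e.toOpenPartialHomeomorph.left_inv hx'src
    · refine ⟨interior W ×ˢ (e.source ∩ (Prod.snd ∘ ⇑e) ⁻¹' {i}), ?_, ?_, ?_⟩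
      · exact isOpen_interior.prod (e.continuousOn_toFun.isOpen_inter_preimage e.open_source
          (continuous_snd.isOpen_preimage _ (isOpen_discrete _)))
      · intro u hu
        refine ⟨hu, hgsrc u (interior_subset hu), ?_⟩
        simp only [Set.mem_preimage, Function.comp_apply, hge u (interior_subset hu),
          Set.mem_singleton_iff]
      · rintro ⟨u, x⟩ ⟨hzS, huW, hxsrc, hxi⟩
        refine ⟨u, interior_subset huW, ?_⟩
        have hxi' : (e x).2 = i := hxi
        have hex : e x = (f u, i) := by
          refine Prod.ext ?_ hxi'
          rw [e.coe_fst hxsrc]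
          exact hzS
        have hxg : x = g u := by
          rw [hg_def]
          simp only [← hex]
          exact (e.toOpenPartialHomeomorph.left_inv hxsrc).symm
        rw [hxg]
  -- absorption into the component
  have absorb : ∀ z ∈ C, ∀ N : Set (Y × Xt), z ∈ N → N ⊆ S → IsPathConnected N → N ⊆ C := by
    intro z hz N hzN hNS hNpc
    have h1 : N ⊆ connectedComponentIn S z :=
      hNpc.isConnected.isPreconnected.subset_connectedComponentIn hzN hNS
    rwa [hC_def, connectedComponentIn_eq hz]
  have graphC : ∀ (W : Set Y) (g : Y → Xt), IsPathConnected W → ContinuousOn g W →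
      (∀ u ∈ W, p (g u) = f u) → ∀ z ∈ C, z.1 ∈ W → g z.1 = z.2 →
      ((fun u => (u, g u)) '' W) ⊆ C := by
    intro W g hWpc hgc hgp z hzC hzW hgz
    refine absorb z hzC _ ⟨z.1, hzW, show (z.1, g z.1) = z from Prod.ext rfl hgz⟩ ?_
      (hWpc.image' (continuousOn_id.prodMk hgc))
    rintro ⟨u, x⟩ ⟨v, hv, heq⟩
    obtain ⟨rfl, rfl⟩ : v = u ∧ g v = x := by
      constructor <;> [exact congrArg Prod.fst heq; exact congrArg Prod.snd heq]
    exact hgp v hv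
  -- each point of C has an open neighborhood joined to it within C
  have hnbhd : ∀ z ∈ C, ∃ O : Set (Y × Xt), IsOpen O ∧ z ∈ O ∧ ∀ w ∈ C ∩ O, JoinedIn C z w := by
    intro z hzC
    obtain ⟨W, hWn, hWpc, inner⟩ := key z.1
    obtain ⟨g, hgc, hgp, hgz, O, hOo, hOm, hOsub⟩ :=
      inner z.1 z.2 (mem_of_mem_nhds hWn) (hCS hzC)
    have hNC : ((fun u => (u, g u)) '' W) ⊆ C :=
      graphC W g hWpc hgc hgp z hzC (mem_of_mem_nhds hWn) hgz
    have hzN : z ∈ ((fun u => (u, g u)) '' W) :=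
      ⟨z.1, mem_of_mem_nhds hWn, show (z.1, g z.1) = z from Prod.ext rfl hgz⟩
    have hzO : z ∈ O := by
      have h1 := hOm z.1 (mem_interior_iff_mem_nhds.2 hWn)
      rw [hgz] at h1
      rwa [Prod.mk.eta] at h1
    refine ⟨O, hOo, hzO, ?_⟩
    intro w hw
    obtain ⟨u, huW, hwu⟩ := hOsub w ⟨hCS hw.1, hw.2⟩
    have hwN : w ∈ ((fun u => (u, g u)) '' W) := ⟨u, huW, hwu.symm⟩
    exact ((hWpc.image' (continuousOn_id.prodMk hgc)).joinedIn z hzN w hwN).mono hNC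
  -- C is path connected through the basepoint
  have hJoin : ∀ z ∈ C, JoinedIn C (y₀, xt₀) z := by
    choose O hOo hOz hOj using hnbhd
    by_contra hcon
    push_neg at hcon
    obtain ⟨z₁, hz₁C, hz₁⟩ := hcon
    set A := ⋃ (z : {w // w ∈ C ∧ JoinedIn C (y₀, xt₀) w}), O z.1 z.2.1 with hA_def
    set Bs := ⋃ (z : {w // w ∈ C ∧ ¬ JoinedIn C (y₀, xt₀) w}), O z.1 z.2.1 with hB_def
    have hpre : IsPreconnected C := isPreconnected_connectedComponentIn
    have hAB : C ⊆ A ∪ Bs := by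
      intro z hz
      by_cases hj : JoinedIn C (y₀, xt₀) z
      · exact Or.inl (Set.mem_iUnion.2 ⟨⟨z, hz, hj⟩, hOz z hz⟩)
      · exact Or.inr (Set.mem_iUnion.2 ⟨⟨z, hz, hj⟩, hOz z hz⟩)
    have hA : (C ∩ A).Nonempty :=
      ⟨(y₀, xt₀), hz₀C, Set.mem_iUnion.2 ⟨⟨_, hz₀C, JoinedIn.refl hz₀C⟩, hOz _ hz₀C⟩⟩
    have hB : (C ∩ Bs).Nonempty :=
      ⟨z₁, hz₁C, Set.mem_iUnion.2 ⟨⟨z₁, hz₁C, hz₁⟩, hOz _ hz₁C⟩⟩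
    obtain ⟨w, hwC, hwA, hwB⟩ := hpre A Bs (isOpen_iUnion fun z => hOo z.1 z.2.1)
      (isOpen_iUnion fun z => hOo z.1 z.2.1) hAB hA hB
    obtain ⟨za, hwOa⟩ := Set.mem_iUnion.mp hwA
    obtain ⟨zb, hwOb⟩ := Set.mem_iUnion.mp hwB
    have h1 : JoinedIn C za.1 w := hOj za.1 za.2.1 w ⟨hwC, hwOa⟩
    have h2 : JoinedIn C zb.1 w := hOj zb.1 zb.2.1 w ⟨hwC, hwOb⟩
    exact zb.2.2 ((za.2.2.trans h1).trans h2.symm)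
  -- vertical uniqueness in C via square lifting
  have uniq : ∀ (y : Y) (a b : Xt), (y, a) ∈ C → (y, b) ∈ C → a = b := by
    intro y a b haC hbC
    obtain ⟨γ, hγ⟩ := ((hJoin (y, a) haC).symm.trans (hJoin (y, b) hbC))
    set γ1 : Path y y := γ.map continuous_fst with hγ1_def
    obtain ⟨Ht⟩ := SimplyConnectedSpace.paths_homotopic γ1 (Path.refl y)
    set projI : ℝ → unitInterval := Set.projIcc 0 1 zero_le_one with hprojI_def
    have hprojI : Continuous projI := continuous_projIcc
    set K : ℝ × ℝ → X := fun z => f (Ht (projI z.2, projI z.1)) with hK_def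
    have hKc : Continuous K := hf.comp (Ht.continuous.comp
      ((hprojI.comp continuous_snd).prodMk (hprojI.comp continuous_fst)))
    have hKt : ∀ s t, K (s, max 0 (min t 1)) = K (s, t) := by
      intro s t
      have hc : projI (max 0 (min t 1)) = projI t := projIcc_clamp t
      show f (Ht (projI (max 0 (min t 1)), projI s)) = f (Ht (projI t, projI s))
      rw [hc]
    set dlt : ℝ → Xt := fun s => (γ (projI s)).2 with hdlt_def
    have hdltc : Continuous dlt := continuous_snd.comp (γ.continuous.comp hprojI)
    have hproj0 : projI (0:ℝ) = 0 := by
      apply Subtype.ext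
      simp [hprojI_def, Set.projIcc]
    have hproj1 : projI (1:ℝ) = 1 := by
      apply Subtype.ext
      simp [hprojI_def, Set.projIcc]
    have hd0 : ∀ s, p (dlt s) = K (s, 0) := by
      intro s
      have h1 : p (γ (projI s)).2 = f (γ (projI s)).1 := hCS (hγ (projI s))
      rw [hK_def, hdlt_def]
      simp only
      rw [hproj0, Ht.apply_zero, h1]
      rfl
    obtain ⟨G, hGc, hGp, hG0⟩ := cov_sq_lift hp hKc hKt hdltc hd0
    have h0mem : (0 : unitInterval) ∈ ({0, 1} : Set unitInterval) := Set.mem_insert _ _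
    have h1mem : (1 : unitInterval) ∈ ({0, 1} : Set unitInterval) :=
      Set.mem_insert_of_mem _ rfl
    -- left edge is constant
    have hL : G (0, 1) = G (0, 0) := by
      refine hp.const_of_comp ((hGc.comp (continuous_const.prodMk continuous_id))) ?_ 1 0
      intro v v'
      show p (G (0, v)) = p (G (0, v'))
      rw [hGp (0, v), hGp (0, v')]
      show K (0, v) = K (0, v')
      rw [hK_def]
      simp only
      rw [hproj0, Ht.eq_fst (projI v) h0mem, Ht.eq_fst (projI v') h0mem]
    -- right edge is constant
    have hR : G (1, 1) = G (1, 0) := by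
      refine hp.const_of_comp ((hGc.comp (continuous_const.prodMk continuous_id))) ?_ 1 0
      intro v v'
      show p (G (1, v)) = p (G (1, v'))
      rw [hGp (1, v), hGp (1, v')]
      show K (1, v) = K (1, v')
      rw [hK_def]
      simp only
      rw [hproj1, Ht.eq_snd (projI v) h1mem, Ht.eq_snd (projI v') h1mem]
    -- top edge is constant
    have hT : G (0, 1) = G (1, 1) := by
      refine hp.const_of_comp ((hGc.comp (continuous_id.prodMk continuous_const))) ?_ 0 1
      intro u u'
      show p (G (u, 1)) = p (G (u', 1))
      rw [hGp (u, 1), hGp (u', 1)]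
      show K (u, 1) = K (u', 1)
      rw [hK_def]
      simp only
      rw [hproj1, Ht.apply_one, Ht.apply_one]
      rfl
    have ha : G (0, 0) = a := by
      rw [hG0 0, hdlt_def]
      simp only
      rw [hproj0]
      show (γ 0).2 = a
      rw [γ.source]
    have hb : G (1, 0) = b := by
      rw [hG0 1, hdlt_def]
      simp only
      rw [hproj1]
      show (γ 1).2 = b
      rw [γ.target]
    rw [← ha, ← hb, ← hL, hT, hR]
  -- surjectivity of the component over Y
  have hD : ∀ y : Y, ∃ x, (y, x) ∈ C := by
    set D : Set Y := {y | ∃ x, (y, x) ∈ C} with hD_def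
    have hDopen : IsOpen D := by
      rw [isOpen_iff_mem_nhds]
      rintro y ⟨x, hx⟩
      obtain ⟨W, hWn, hWpc, inner⟩ := key y
      obtain ⟨g, hgc, hgp, hgz, _⟩ := inner y x (mem_of_mem_nhds hWn) (hCS hx)
      have hNC := graphC W g hWpc hgc hgp (y, x) hx (mem_of_mem_nhds hWn) hgz
      exact Filter.mem_of_superset hWn (fun u hu => ⟨g u, hNC ⟨u, hu, rfl⟩⟩)
    have hDclosed : IsClosed D := by
      rw [← isOpen_compl_iff, isOpen_iff_mem_nhds]
      intro y hy
      obtain ⟨W, hWn, hWpc, inner⟩ := key y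
      apply Filter.mem_of_superset hWn
      intro u hu
      rintro ⟨x, hx⟩
      obtain ⟨g, hgc, hgp, hgz, _⟩ := inner u x hu (hCS hx)
      have hNC := graphC W g hWpc hgc hgp (u, x) hx hu hgz
      exact hy ⟨g y, hNC ⟨y, mem_of_mem_nhds hWn, rfl⟩⟩
    have hDuniv : D = Set.univ :=
      IsClopen.eq_univ ⟨hDclosed, hDopen⟩ ⟨y₀, ⟨xt₀, hz₀C⟩⟩
    intro y
    have : y ∈ D := hDuniv ▸ Set.mem_univ y
    exact this
  set ft : Y → Xt := fun y => Classical.choose (hD y) with hft_def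
  have hftC : ∀ y, (y, ft y) ∈ C := fun y => Classical.choose_spec (hD y)
  have hftu : ∀ y x, (y, x) ∈ C → x = ft y := fun y x hx => uniq y x (ft y) hx (hftC y)
  refine ⟨ft, ?_, ?_, ?_, ?_⟩
  · rw [continuous_iff_continuousAt]
    intro y
    obtain ⟨W, hWn, hWpc, inner⟩ := key y
    obtain ⟨g, hgc, hgp, hgz, _⟩ := inner y (ft y) (mem_of_mem_nhds hWn) (hCS (hftC y))
    have hNC := graphC W g hWpc hgc hgp (y, ft y) (hftC y) (mem_of_mem_nhds hWn) hgz
    have heq : Set.EqOn g ft W := fun u hu => hftu u (g u) (hNC ⟨u, hu, rfl⟩)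
    exact (hgc.continuousAt hWn).congr (Filter.eventuallyEq_of_mem hWn heq)
  · funext y
    exact hCS (hftC y)
  · exact (hftu y₀ xt₀ hz₀C).symm
  · ext z
    constructor
    · intro hz
      have h1 : (z.1, ft z.1) ∈ C := hftC z.1
      have h2 : z.2 = ft z.1 := hz
      rw [hC_def] at h1 ⊢
      rwa [show z = (z.1, ft z.1) from Prod.ext rfl h2]
    · intro hz
      have h1 : (z.1, z.2) ∈ C := by rwa [Prod.mk.eta]
      exact hftu z.1 z.2 h1
end
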